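/- Let f, g : ℝ → ℝ be continuous with f ≤ g pointwise and f(s) < g(s) for some s. Let t₁ = sup{t < s : f(t) = g(t)}, t₂ = inf{t > s : f(t) = g(t)}, and U = {(x, t) : f(t) < x < g(t), t₁ < t < t₂}. Let Γ_f = {(f(t), t) : t ∈ ℝ}, Γ_g = {(g(t), t) : t ∈ ℝ}, and let V be any open subset of ℝ² \ (Γ_f ∪ Γ_g) containing U. Then U is a connected component of V. -/
import Mathlib


/-- With `f ≤ g` continuous, `f s < g s`, `t₁, t₂` as in Lemma B.1, and
`U` the open region strictly between the graphs over `(t₁, t₂)`: for any open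
`V ⊆ ℝ² \ (Γ_f ∪ Γ_g)` containing `U`, the set `U` is a connected component of `V`. -/
theorem region_between_is_component (f g : ℝ → ℝ) (hfc : Continuous f) (hgc : Continuous g)
    (hfg : ∀ t, f t ≤ g t) (s : ℝ) (hs : f s < g s)
    (U : Set (ℝ × ℝ))
    (hU : U =
      {p : ℝ × ℝ |
        f p.2 < p.1 ∧ p.1 < g p.2 ∧
        sSup ((fun t : ℝ => (t : EReal)) '' {t : ℝ | t < s ∧ f t = g t}) < (p.2 : EReal) ∧
        (p.2 : EReal) < sInf ((fun t : ℝ => (t : EReal)) '' {t : ℝ | s < t ∧ f t = g t})})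
    (V : Set (ℝ × ℝ)) (hVopen : IsOpen V)
    (hVdisj : V ⊆ ({p : ℝ × ℝ | p.1 = f p.2} ∪ {p : ℝ × ℝ | p.1 = g p.2})ᶜ)
    (hUV : U ⊆ V) :
    ∀ p ∈ U, connectedComponentIn V p = U := by
  set A : EReal := sSup ((fun t : ℝ => (t : EReal)) '' {t : ℝ | t < s ∧ f t = g t}) with hAdef
  set B : EReal := sInf ((fun t : ℝ => (t : EReal)) '' {t : ℝ | s < t ∧ f t = g t}) with hBdef
  have hclosed_eq : IsClosed {t : ℝ | f t = g t} := isClosed_eq hfc hgc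
  -- if A is a real number r, then f r = g r
  have keyA : ∀ r : ℝ, A = (r : EReal) → f r = g r := by
    intro r hr
    have hmem : r ∈ closure {t : ℝ | t < s ∧ f t = g t} := by
      rw [Metric.mem_closure_iff]
      intro ε hε
      have h1 : ((r - ε : ℝ) : EReal) < A := by
        rw [hr]; exact_mod_cast sub_lt_self r hε
      obtain ⟨b, hb, hbt⟩ := lt_sSup_iff.mp h1
      obtain ⟨t, ht, rfl⟩ := hb
      refine ⟨t, ht, ?_⟩
      have hle : ((t : ℝ) : EReal) ≤ A := le_sSup ⟨t, ht, rfl⟩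
      have htr : t ≤ r := by
        rw [hr] at hle; exact_mod_cast hle
      have hbt' : ((r - ε : ℝ) : EReal) < ((t : ℝ) : EReal) := hbt
      have htε : r - ε < t := by exact_mod_cast hbt'
      rw [Real.dist_eq, abs_of_nonneg (by linarith)]
      linarith
    have : r ∈ {t : ℝ | f t = g t} :=
      hclosed_eq.closure_subset
        ((closure_mono (fun t ht => ht.2)) hmem)
    exact this
  have keyB : ∀ r : ℝ, B = (r : EReal) → f r = g r := by
    intro r hr
    have hmem : r ∈ closure {t : ℝ | s < t ∧ f t = g t} := by
      rw [Metric.mem_closure_iff]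
      intro ε hε
      have h1 : B < ((r + ε : ℝ) : EReal) := by
        rw [hr]; exact_mod_cast lt_add_of_pos_right r hε
      obtain ⟨b, hb, hbt⟩ := sInf_lt_iff.mp h1
      obtain ⟨t, ht, rfl⟩ := hb
      refine ⟨t, ht, ?_⟩
      have hle : B ≤ ((t : ℝ) : EReal) := sInf_le ⟨t, ht, rfl⟩
      have htr : r ≤ t := by
        rw [hr] at hle; exact_mod_cast hle
      have hbt' : ((t : ℝ) : EReal) < ((r + ε : ℝ) : EReal) := hbt
      have htε : t < r + ε := by exact_mod_cast hbt'
      rw [Real.dist_eq, abs_of_nonpos (by linarith)]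
      linarith
    exact hclosed_eq.closure_subset ((closure_mono (fun t ht => ht.2)) hmem)
  -- A < s < B
  have hAs : A < (s : EReal) := by
    have hle : A ≤ (s : EReal) := by
      apply sSup_le
      rintro b ⟨t, ht, rfl⟩
      show ((t : ℝ) : EReal) ≤ ((s : ℝ) : EReal)
      exact_mod_cast ht.1.le
    rcases lt_or_eq_of_le hle with h | h
    · exact h
    · exact absurd (keyA s h) hs.ne
  have hsB : (s : EReal) < B := by
    have hle : (s : EReal) ≤ B := by
      apply le_sInf
      rintro b ⟨t, ht, rfl⟩
      show ((s : ℝ) : EReal) ≤ ((t : ℝ) : EReal)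
      exact_mod_cast ht.1.le
    rcases lt_or_eq_of_le hle with h | h
    · exact h
    · exact absurd (keyB s h.symm) hs.ne
  -- strict separation between graphs inside the interval
  have hsep : ∀ u : ℝ, A < (u : EReal) → (u : EReal) < B → f u < g u := by
    intro u hu1 hu2
    rcases lt_or_eq_of_le (hfg u) with h | h
    · exact h
    · rcases lt_trichotomy u s with hus | hus | hus
      · have : ((u : ℝ) : EReal) ≤ A := le_sSup ⟨u, ⟨hus, h⟩, rfl⟩
        exact absurd this (not_le_of_gt hu1)
      · subst hus; exact absurd h hs.ne
      · have : B ≤ ((u : ℝ) : EReal) := sInf_le ⟨u, ⟨hus, h⟩, rfl⟩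
        exact absurd this (not_le_of_gt hu2)
  -- U is open
  have hcoe2 : Continuous fun p : ℝ × ℝ => ((p.2 : ℝ) : EReal) :=
    continuous_coe_real_ereal.comp continuous_snd
  have hUopen : IsOpen U := by
    rw [hU]
    apply IsOpen.inter (isOpen_lt (hfc.comp continuous_snd) continuous_fst)
    apply IsOpen.inter (isOpen_lt continuous_fst (hgc.comp continuous_snd))
    exact IsOpen.inter (isOpen_Ioi.preimage hcoe2) (isOpen_Iio.preimage hcoe2)
  -- U is preconnected, via paths through the midline
  have hmid : ∀ u : ℝ, A < (u : EReal) → (u : EReal) < B →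
      ((f u + g u) / 2, u) ∈ U := by
    intro u h1 h2
    have := hsep u h1 h2
    rw [hU]
    exact ⟨by dsimp; linarith, by dsimp; linarith, h1, h2⟩
  have hx0 : ((f s + g s) / 2, s) ∈ U := hmid s hAs hsB
  have hUpre : IsPreconnected U := by
    apply isPreconnected_of_forall (((f s + g s) / 2, s) : ℝ × ℝ)
    rintro ⟨x, t⟩ hq
    rw [hU] at hq
    obtain ⟨hq1, hq2, hq3, hq4⟩ := hq
    dsimp at hq1 hq2 hq3 hq4
    -- midline over uIcc s t, plus horizontal segment at level t
    set M : Set (ℝ × ℝ) := (fun u : ℝ => (((f u + g u) / 2, u) : ℝ × ℝ)) '' Set.uIcc s t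
    set S : Set (ℝ × ℝ) := segment ℝ (((f t + g t) / 2, t) : ℝ × ℝ) (x, t)
    have hint : ∀ u ∈ Set.uIcc s t, A < (u : EReal) ∧ (u : EReal) < B := by
      intro u hu
      rw [Set.uIcc_eq_union] at hu
      constructor
      · rcases hu with hu | hu
        · exact lt_of_lt_of_le hAs (by exact_mod_cast hu.1)
        · exact lt_of_lt_of_le hq3 (by exact_mod_cast hu.1)
      · rcases hu with hu | hu
        · exact lt_of_le_of_lt (show ((u:ℝ):EReal) ≤ (t:ℝ) by exact_mod_cast hu.2) hq4
        · exact lt_of_le_of_lt (show ((u:ℝ):EReal) ≤ (s:ℝ) by exact_mod_cast hu.2) hsB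
    have hMU : M ⊆ U := by
      rintro _ ⟨u, hu, rfl⟩
      obtain ⟨h1, h2⟩ := hint u hu
      exact hmid u h1 h2
    have hSU : S ⊆ U := by
      rintro p hp
      obtain ⟨a, b, ha, hb, hab, rfl⟩ := hp
      have hft := hsep t hq3 hq4
      have e2 : a * t + b * t = t := by rw [← add_mul, hab, one_mul]
      have hpt : (a • (((f t + g t) / 2, t) : ℝ × ℝ) + b • ((x, t) : ℝ × ℝ)) =
          ((a * ((f t + g t) / 2) + b * x, t) : ℝ × ℝ) := by
        simp [Prod.ext_iff, smul_eq_mul, e2]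
      rw [hpt, hU]
      have hconv : f t < a * ((f t + g t) / 2) + b * x ∧
          a * ((f t + g t) / 2) + b * x < g t := by
        rcases lt_or_ge 0 a with hpos | hnp
        · have l1 := mul_lt_mul_of_pos_left (show f t < (f t + g t) / 2 by linarith) hpos
          have l2 := mul_lt_mul_of_pos_left (show (f t + g t) / 2 < g t by linarith) hpos
          have l3 := mul_le_mul_of_nonneg_left hq1.le hb
          have l4 := mul_le_mul_of_nonneg_left hq2.le hb
          have ef : a * f t + b * f t = f t := by rw [← add_mul, hab, one_mul]
          have eg : a * g t + b * g t = g t := by rw [← add_mul, hab, one_mul]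
          constructor <;> linarith
        · have ha0 : a = 0 := le_antisymm hnp ha
          have hb1 : b = 1 := by linarith
          subst ha0; subst hb1
          constructor <;> simp <;> linarith
      exact ⟨hconv.1, hconv.2, hq3, hq4⟩
    refine ⟨M ∪ S, Set.union_subset hMU hSU, ?_, ?_, ?_⟩
    · exact Or.inl ⟨s, Set.left_mem_uIcc, rfl⟩
    · exact Or.inr (right_mem_segment ℝ _ _)
    · apply IsPreconnected.union (((f t + g t) / 2, t) : ℝ × ℝ)
      · exact ⟨t, Set.right_mem_uIcc, rfl⟩
      · exact left_mem_segment ℝ _ _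
      · exact (isPreconnected_uIcc.image _
          (((hfc.add hgc).div_const 2).prodMk continuous_id).continuousOn)
      · exact (convex_segment _ _).isPreconnected
  -- V ∩ closure U ⊆ U
  have hCclosed : IsClosed {p : ℝ × ℝ | f p.2 ≤ p.1 ∧ p.1 ≤ g p.2 ∧
      A ≤ (p.2 : EReal) ∧ (p.2 : EReal) ≤ B} := by
    apply IsClosed.inter (isClosed_le (hfc.comp continuous_snd) continuous_fst)
    apply IsClosed.inter (isClosed_le continuous_fst (hgc.comp continuous_snd))
    exact IsClosed.inter (isClosed_Ici.preimage hcoe2) (isClosed_Iic.preimage hcoe2)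
  have hUsubC : closure U ⊆ {p : ℝ × ℝ | f p.2 ≤ p.1 ∧ p.1 ≤ g p.2 ∧
      A ≤ (p.2 : EReal) ∧ (p.2 : EReal) ≤ B} := by
    apply closure_minimal _ hCclosed
    rw [hU]
    rintro p ⟨h1, h2, h3, h4⟩
    exact ⟨h1.le, h2.le, h3.le, h4.le⟩
  have hVclosU : V ∩ closure U ⊆ U := by
    rintro p ⟨hpV, hpC⟩
    obtain ⟨h1, h2, h3, h4⟩ := hUsubC hpC
    have hne := hVdisj hpV
    simp only [Set.mem_compl_iff, Set.mem_union, Set.mem_setOf_eq, not_or] at hne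
    have h1' : f p.2 < p.1 := lt_of_le_of_ne h1 (Ne.symm hne.1)
    have h2' : p.1 < g p.2 := lt_of_le_of_ne h2 hne.2
    have hflt : f p.2 < g p.2 := h1'.trans h2'
    have h3' : A < (p.2 : EReal) := by
      rcases lt_or_eq_of_le h3 with h | h
      · exact h
      · exact absurd (keyA p.2 h) hflt.ne
    have h4' : (p.2 : EReal) < B := by
      rcases lt_or_eq_of_le h4 with h | h
      · exact h
      · exact absurd (keyB p.2 h.symm) hflt.ne
    rw [hU]
    exact ⟨h1', h2', h3', h4'⟩
  -- conclude
  intro p hp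
  apply le_antisymm
  · have hsub : connectedComponentIn V p ⊆ U ∪ (closure U)ᶜ := by
      intro q hq
      have hqV : q ∈ V := connectedComponentIn_subset V p hq
      by_cases hqc : q ∈ closure U
      · exact Or.inl (hVclosU ⟨hqV, hqc⟩)
      · exact Or.inr hqc
    exact (isPreconnected_connectedComponentIn).subset_left_of_subset_union hUopen
      isClosed_closure.isOpen_compl
      (Set.disjoint_left.mpr fun q hq hqc => hqc (subset_closure hq)) hsub
      ⟨p, mem_connectedComponentIn (hUV hp), hp⟩
  · exact hUpre.subset_connectedComponentIn hp hUV
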